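/- Let R be a commutative ring, M an R-module, and φ: F → G a map of finite-rank free R-modules. Let I(φ) denote the ideal of maximal minors of φ. Then φ ⊗ id_M : F ⊗ M → G ⊗ M is injective if and only if the grade of I(φ) on M is at least 1, i.e., I(φ) contains an element that is a non-zerodivisor on M (in the sense of true grade). -/

import Mathlib

/-!
STATEMENT 1: (Northcott)  For a map `φ : F → G` of finite-rank free modules over a
commutative ring `R` and an `R`-module `M`, the map `φ ⊗ id_M` is injective iff the
true grade of the ideal `I(φ)` of maximal minors on `M` is at least `1`, i.e. some
polynomial extension `I(φ)·R[x₁,…,x_k]` contains a non-zerodivisor on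
`M ⊗ R[x₁,…,x_k]`.
-/

/-- The ideal generated by the `k × k` minors of `M`. -/
def minorsIdeal {R : Type*} [CommRing R] {a b : ℕ}
    (M : Matrix (Fin a) (Fin b) R) (k : ℕ) : Ideal R :=
  Ideal.span {x | ∃ (ri : Fin k → Fin a) (ci : Fin k → Fin b),
    Function.Injective ri ∧ Function.Injective ci ∧ x = (M.submatrix ri ci).det}

open TensorProduct

namespace NorthcottAux

variable {R : Type*} [CommRing R] {M : Type*} [AddCommGroup M] [Module R M]

/-- A matrix over `R` acting on vectors with entries in an `R`-module. -/
noncomputable def mvec {n m : ℕ} (φ : Matrix (Fin n) (Fin m) R) :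
    (Fin m → M) →ₗ[R] (Fin n → M) where
  toFun u := fun i => ∑ j, φ i j • u j
  map_add' u v := by funext i; simp [smul_add, Finset.sum_add_distrib]
  map_smul' r u := by
    funext i
    simp only [Pi.smul_apply, RingHom.id_apply, Finset.smul_sum]
    exact Finset.sum_congr rfl fun j _ => (smul_comm r (φ i j) (u j)).symm

lemma mvec_apply {n m : ℕ} (φ : Matrix (Fin n) (Fin m) R) (u : Fin m → M) (i : Fin n) :
    (mvec (M := M) φ) u i = ∑ j, φ i j • u j := rfl

lemma mvec_mul {n l m : ℕ} (A : Matrix (Fin n) (Fin l) R) (B : Matrix (Fin l) (Fin m) R)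
    (u : Fin m → M) : mvec (M := M) (A * B) u = mvec A (mvec B u) := by
  funext i
  simp only [mvec_apply, Matrix.mul_apply, Finset.sum_smul, Finset.smul_sum, mul_smul]
  exact Finset.sum_comm

lemma mvec_smul_one {t : ℕ} (d : R) (u : Fin t → M) :
    mvec (M := M) (d • (1 : Matrix (Fin t) (Fin t) R)) u = d • u := by
  funext i
  simp [mvec_apply, Matrix.smul_apply, Matrix.one_apply, ite_smul, mul_smul]



/-- `(Fin l → R) ⊗ M ≃ (Fin l → M)`. -/
noncomputable def tpe (l : ℕ) : ((Fin l → R) ⊗[R] M) ≃ₗ[R] (Fin l → M) :=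
  (TensorProduct.comm R _ M) ≪≫ₗ TensorProduct.piScalarRight R R M (Fin l)

lemma tpe_tmul (l : ℕ) (v : Fin l → R) (z : M) :
    tpe l (v ⊗ₜ[R] z) = fun j => v j • z := by
  simp [tpe]

lemma tpe_naturality {n m : ℕ} (φ : Matrix (Fin n) (Fin m) R)
    (w : (Fin m → R) ⊗[R] M) :
    tpe n (LinearMap.rTensor M φ.mulVecLin w) = mvec φ (tpe m w) := by
  induction w with
  | zero => simp
  | add x y hx hy => simp [hx, hy]
  | tmul v z =>
      rw [LinearMap.rTensor_tmul, tpe_tmul, tpe_tmul]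
      funext i
      simp only [Matrix.mulVecLin_apply, mvec_apply, Matrix.mulVec, dotProduct]
      rw [Finset.sum_smul]
      exact Finset.sum_congr rfl fun j _ => (mul_smul _ _ _)

lemma inj_rTensor_iff_mvec {n m : ℕ} (φ : Matrix (Fin n) (Fin m) R) :
    Function.Injective (LinearMap.rTensor M φ.mulVecLin) ↔
      Function.Injective (mvec (M := M) φ) := by
  have key : ∀ w, LinearMap.rTensor M φ.mulVecLin w
      = (tpe n).symm (mvec φ (tpe m w)) := by
    intro w; rw [← tpe_naturality]; simp
  constructor
  · intro h u1 u2 hu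
    have h2 : LinearMap.rTensor M φ.mulVecLin ((tpe m).symm u1)
        = LinearMap.rTensor M φ.mulVecLin ((tpe m).symm u2) := by
      rw [key, key]
      simp only [LinearEquiv.apply_symm_apply]
      rw [hu]
    have := h h2
    exact (tpe m).symm.injective this
  · intro h w1 w2 hw
    rw [key, key] at hw
    exact (tpe m).injective (h ((tpe n).symm.injective hw))



/-- From a nonzero kernel vector, all maximal minors annihilate some nonzero element. -/
lemma ker_to_ann {n m : ℕ} (φ : Matrix (Fin n) (Fin m) R) (u : Fin m → M)
    (hu : u ≠ 0) (h : mvec φ u = 0) :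
    ∃ z : M, z ≠ 0 ∧ ∀ (ri : Fin m → Fin n) (ci : Fin m → Fin m),
      Function.Injective ri → Function.Injective ci →
      (φ.submatrix ri ci).det • z = 0 := by
  have : ∃ j₀, u j₀ ≠ 0 := by
    by_contra hc
    push_neg at hc
    exact hu (funext fun j => hc j)
  obtain ⟨j₀, hj₀⟩ := this
  refine ⟨u j₀, hj₀, fun ri ci hri hci => ?_⟩
  have hcib : Function.Bijective ci := (Finite.injective_iff_bijective).mp hci
  set A := φ.submatrix ri ci with hA
  have hAu : mvec (M := M) A (u ∘ ci) = 0 := by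
    funext i
    have : (mvec (M := M) A (u ∘ ci)) i = ∑ c, φ (ri i) c • u c := by
      rw [mvec_apply]
      exact Fintype.sum_bijective ci hcib _ _ (fun j => rfl)
    rw [this]
    have h0 := congrFun h (ri i)
    rw [mvec_apply] at h0
    exact h0
  have key : A.det • (u ∘ ci) = 0 := by
    have h1 : mvec (M := M) (A.adjugate * A) (u ∘ ci) = 0 := by
      rw [mvec_mul, hAu, map_zero]
    rwa [Matrix.adjugate_mul, mvec_smul_one] at h1
  obtain ⟨j, hj⟩ := hcib.surjective j₀
  have := congrFun key j
  simp only [Pi.smul_apply, Function.comp_apply, hj, Pi.zero_apply] at this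
  exact this


lemma snoc_inj {t : ℕ} {α : Type*} {f : Fin t → α} {x : α}
    (hf : Function.Injective f) (hx : ∀ s, f s ≠ x) :
    Function.Injective (Fin.snoc f x : Fin (t + 1) → α) := by
  intro a b hab
  rcases Fin.eq_castSucc_or_eq_last a with ⟨i, rfl⟩ | rfl <;>
    rcases Fin.eq_castSucc_or_eq_last b with ⟨j, rfl⟩ | rfl
  · simp only [Fin.snoc_castSucc] at hab
    exact congrArg Fin.castSucc (hf hab)
  · simp only [Fin.snoc_castSucc, Fin.snoc_last] at hab
    exact absurd hab (hx i)
  · simp only [Fin.snoc_castSucc, Fin.snoc_last] at hab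
    exact absurd hab.symm (hx j)
  · rfl

lemma ann_to_ker {n m : ℕ} (φ : Matrix (Fin n) (Fin m) R) :
    ∀ t, t ≤ m → ∀ z : M, z ≠ 0 →
      (∀ (ri : Fin t → Fin n) (ci : Fin t → Fin m),
        Function.Injective ri → Function.Injective ci →
        (φ.submatrix ri ci).det • z = 0) →
      ∃ u : Fin m → M, u ≠ 0 ∧ mvec φ u = 0 := by
  intro t
  induction t with
  | zero =>
      intro _ z hz hmin
      exfalso
      have := hmin Fin.elim0 Fin.elim0 (fun a => a.elim0) (fun a => a.elim0)
      rw [Matrix.det_fin_zero, one_smul] at this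
      exact hz this
  | succ t IH =>
      intro ht z hz hmin
      by_cases hall : ∀ (ri : Fin t → Fin n) (ci : Fin t → Fin m),
          Function.Injective ri → Function.Injective ci →
          (φ.submatrix ri ci).det • z = 0
      · exact IH (Nat.le_of_succ_le ht) z hz hall
      push_neg at hall
      obtain ⟨ri, ci, hri, hci, hδ⟩ := hall
      have hcs : ∃ c : Fin m, ∀ s, ci s ≠ c := by
        by_contra hc
        push_neg at hc
        have := Fintype.card_le_of_surjective ci (fun c => hc c)
        simp only [Fintype.card_fin] at this
        omega
      obtain ⟨cs, hcs⟩ := hcs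
      set ci' : Fin (t+1) → Fin m := Fin.snoc ci cs with hci'def
      have hci' : Function.Injective ci' := snoc_inj hci hcs
      set coef : Fin (t+1) → R :=
        fun j => (-1 : R) ^ (t + (j : ℕ)) * (φ.submatrix ri (ci' ∘ j.succAbove)).det
        with hcoef
      set u : Fin m → M := fun c => ∑ j, (if c = ci' j then coef j else 0) • z with hu
      have key : ∀ i : Fin n,
          (mvec (M := M) φ) u i = (φ.submatrix (Fin.snoc ri i) ci').det • z := by
        intro i
        have expand : (φ.submatrix (Fin.snoc ri i) ci').det
            = ∑ j : Fin (t+1), (-1 : R) ^ (t + (j : ℕ)) * φ i (ci' j)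
                * (φ.submatrix ri (ci' ∘ j.succAbove)).det := by
          rw [Matrix.det_succ_row _ (Fin.last t)]
          refine Finset.sum_congr rfl fun j _ => ?_
          have h1 : (φ.submatrix (Fin.snoc ri i) ci') (Fin.last t) j = φ i (ci' j) := by
            simp [Matrix.submatrix_apply, Fin.snoc_last]
          have h2 : ((φ.submatrix (Fin.snoc ri i) ci').submatrix
                (Fin.last t).succAbove j.succAbove)
              = φ.submatrix ri (ci' ∘ j.succAbove) := by
            rw [Matrix.submatrix_submatrix]
            congr 1
            funext s
            simp [Fin.succAbove_last, Fin.snoc_castSucc]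
          rw [h1, h2, Fin.val_last]
        rw [expand, Finset.sum_smul, mvec_apply]
        have step1 : ∀ c : Fin m, φ i c • u c
            = ∑ j, (if c = ci' j then (φ i c * coef j) • z else 0) := by
          intro c
          simp only [hu]
          rw [Finset.smul_sum]
          refine Finset.sum_congr rfl fun j _ => ?_
          by_cases hc : c = ci' j <;> simp [hc, smul_smul]
        calc ∑ c, φ i c • u c
            = ∑ c, ∑ j, (if c = ci' j then (φ i c * coef j) • z else 0) := by
              exact Finset.sum_congr rfl fun c _ => step1 c
          _ = ∑ j, ∑ c, (if c = ci' j then (φ i c * coef j) • z else 0) :=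
              Finset.sum_comm
          _ = ∑ j, (φ i (ci' j) * coef j) • z := by
              refine Finset.sum_congr rfl fun j _ => ?_
              rw [Finset.sum_ite_eq' Finset.univ (ci' j)
                (fun c => (φ i c * coef j) • z)]
              simp
          _ = ∑ j : Fin (t+1), ((-1 : R) ^ (t + (j : ℕ)) * φ i (ci' j)
                * (φ.submatrix ri (ci' ∘ j.succAbove)).det) • z := by
              refine Finset.sum_congr rfl fun j _ => ?_
              rw [hcoef]
              ring_nf
      have hmvec : (mvec (M := M) φ) u = 0 := by
        funext i
        rw [key i]
        by_cases hi : ∃ s, ri s = i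
        · obtain ⟨s, hs⟩ := hi
          have hrow : (φ.submatrix (Fin.snoc ri i) ci') (Fin.castSucc s)
              = (φ.submatrix (Fin.snoc ri i) ci') (Fin.last t) := by
            funext j
            simp [Matrix.submatrix_apply, Fin.snoc_castSucc, Fin.snoc_last, hs]
          rw [Matrix.det_zero_of_row_eq (Fin.castSucc_lt_last s).ne hrow, zero_smul]
          rfl
        · push_neg at hi
          have hri' : Function.Injective (Fin.snoc ri i : Fin (t+1) → Fin n) :=
            snoc_inj hri (fun s => hi s)
          have := hmin (Fin.snoc ri i) ci' hri' hci'
          rw [this]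
          rfl
      have hucs : u cs = (φ.submatrix ri ci).det • z := by
        simp only [hu]
        rw [Finset.sum_eq_single (Fin.last t)]
        · have h1 : cs = ci' (Fin.last t) := by rw [hci'def, Fin.snoc_last]
          rw [if_pos h1]
          simp only [hcoef]
          have h2 : (ci' ∘ (Fin.last t).succAbove) = ci := by
            funext s
            simp [hci'def, Fin.succAbove_last, Fin.snoc_castSucc]
          rw [h2, Fin.val_last]
          rw [Even.neg_one_pow (Even.add_self t), one_mul]
        · intro j _ hj
          rcases Fin.eq_castSucc_or_eq_last j with ⟨j', rfl⟩ | rfl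
          · have : cs ≠ ci' (Fin.castSucc j') := by
              rw [hci'def, Fin.snoc_castSucc]
              exact fun h => hcs j' h.symm
            rw [if_neg this, zero_smul]
          · exact absurd rfl hj
        · intro h
          exact absurd (Finset.mem_univ _) h
      refine ⟨u, ?_, hmvec⟩
      intro h0
      rw [h0] at hucs
      exact hδ hucs.symm

open MvPolynomial

/-- `MvPolynomial σ R ⊗[R] N ≃ₗ[R] (σ →₀ ℕ) →₀ N`. -/
noncomputable def _root_.MvPolynomial.scalarRTensor {R : Type*} [CommRing R] {σ : Type*}
    {N : Type*} [AddCommGroup N] [Module R N] :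
    (MvPolynomial σ R ⊗[R] N) ≃ₗ[R] ((σ →₀ ℕ) →₀ N) := by
  classical exact
  (TensorProduct.congr (AddMonoidAlgebra.coeffLinearEquiv R) (LinearEquiv.refl R N)) ≪≫ₗ
    TensorProduct.finsuppScalarLeft R N (σ →₀ ℕ)

lemma _root_.MvPolynomial.scalarRTensor_apply_tmul_apply {R : Type*} [CommRing R] {σ : Type*}
    {N : Type*} [AddCommGroup N] [Module R N] (p : MvPolynomial σ R) (n : N) (d : σ →₀ ℕ) :
    MvPolynomial.scalarRTensor (p ⊗ₜ[R] n) d = MvPolynomial.coeff d p • n := by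
  simp only [MvPolynomial.scalarRTensor, LinearEquiv.trans_apply, TensorProduct.congr_tmul,
    LinearEquiv.refl_apply, TensorProduct.finsuppScalarLeft_apply_tmul_apply]
  rfl

/-- coefficient functional on `MvPolynomial (Fin 1) R ⊗ M`. -/
noncomputable def coefT (d : Fin 1 →₀ ℕ) :
    (MvPolynomial (Fin 1) R ⊗[R] M) →ₗ[R] M :=
  (Finsupp.lapply d) ∘ₗ
    (MvPolynomial.scalarRTensor (R := R) (σ := Fin 1) (N := M)).toLinearMap

lemma coefT_apply (d : Fin 1 →₀ ℕ) (w : MvPolynomial (Fin 1) R ⊗[R] M) :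
    coefT d w = MvPolynomial.scalarRTensor w d := rfl

lemma coefT_tmul (d : Fin 1 →₀ ℕ) (p : MvPolynomial (Fin 1) R) (z : M) :
    coefT d (p ⊗ₜ[R] z) = MvPolynomial.coeff d p • z :=
  scalarRTensor_apply_tmul_apply p z d

noncomputable def coef1 (e : ℕ) : (MvPolynomial (Fin 1) R ⊗[R] M) →ₗ[R] M :=
  coefT (Finsupp.single (0 : Fin 1) e)

lemma fin1_eq_single (d : Fin 1 →₀ ℕ) : d = Finsupp.single 0 (d 0) := by
  apply Finsupp.ext
  intro a
  have ha : a = 0 := Subsingleton.elim a 0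
  subst ha
  simp

lemma eq_zero_of_coef1 (w : MvPolynomial (Fin 1) R ⊗[R] M)
    (h : ∀ e, coef1 e w = (0 : M)) : w = 0 := by
  have hT : MvPolynomial.scalarRTensor (R := R) (σ := Fin 1) (N := M) w = 0 := by
    ext d
    rw [fin1_eq_single d]
    exact h (d 0)
  have := congrArg (MvPolynomial.scalarRTensor (R := R) (σ := Fin 1) (N := M)).symm hT
  simpa using this

noncomputable def deg1 (w : MvPolynomial (Fin 1) R ⊗[R] M) : ℕ :=
  (MvPolynomial.scalarRTensor w).support.sup (fun d => d 0)

lemma coef1_deg1_ne_zero (w : MvPolynomial (Fin 1) R ⊗[R] M) (hw : w ≠ 0) :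
    coef1 (deg1 w) w ≠ 0 := by
  have hT : MvPolynomial.scalarRTensor (R := R) (σ := Fin 1) (N := M) w ≠ 0 := by
    intro h
    apply hw
    have := congrArg (MvPolynomial.scalarRTensor (R := R) (σ := Fin 1) (N := M)).symm h
    simpa using this
  obtain ⟨d, hd, hsup⟩ := Finset.exists_mem_eq_sup _
    (Finsupp.support_nonempty_iff.mpr hT) (fun d => d 0)
  unfold deg1
  rw [hsup, coef1, coefT_apply, ← fin1_eq_single d]
  exact Finsupp.mem_support_iff.mp hd

lemma coef1_eq_zero_of_deg1_lt (w : MvPolynomial (Fin 1) R ⊗[R] M) (e : ℕ)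
    (h : deg1 w < e) : coef1 e w = 0 := by
  by_contra hc
  have hmem : Finsupp.single (0 : Fin 1) e ∈ (MvPolynomial.scalarRTensor w).support :=
    Finsupp.mem_support_iff.mpr hc
  have := Finset.le_sup (f := fun d : Fin 1 →₀ ℕ => d 0) hmem
  simp only [Finsupp.single_eq_same] at this
  exact absurd (lt_of_lt_of_le h this) (lt_irrefl _)

lemma smul_comm_poly (a : MvPolynomial (Fin 1) R) (r : R)
    (v : MvPolynomial (Fin 1) R ⊗[R] M) : a • (r • v) = r • (a • v) := by
  rw [← algebraMap_smul (MvPolynomial (Fin 1) R) r v,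
    ← algebraMap_smul (MvPolynomial (Fin 1) R) r (a • v), smul_smul, smul_smul, mul_comm]

lemma C_smul (s : R) (w : MvPolynomial (Fin 1) R ⊗[R] M) :
    (MvPolynomial.C s : MvPolynomial (Fin 1) R) • w = s • w := by
  rw [show (MvPolynomial.C s : MvPolynomial (Fin 1) R)
      = algebraMap R (MvPolynomial (Fin 1) R) s from rfl, algebraMap_smul]

lemma coef1_X_smul_zero (w : MvPolynomial (Fin 1) R ⊗[R] M) :
    coef1 0 ((X (0 : Fin 1) : MvPolynomial (Fin 1) R) • w) = 0 := by
  induction w with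
  | zero => rw [smul_zero, map_zero]
  | add x y hx hy => rw [smul_add, map_add, hx, hy, add_zero]
  | tmul p z =>
      have : (X (0 : Fin 1) : MvPolynomial (Fin 1) R) • (p ⊗ₜ[R] z)
          = ((X 0 * p : MvPolynomial (Fin 1) R) ⊗ₜ[R] z) := by
        rw [TensorProduct.smul_tmul', smul_eq_mul]
      rw [this, coef1, coefT_tmul, MvPolynomial.coeff_X_mul']
      simp

lemma coef1_X_smul_succ (e : ℕ) (w : MvPolynomial (Fin 1) R ⊗[R] M) :
    coef1 (e + 1) ((X (0 : Fin 1) : MvPolynomial (Fin 1) R) • w) = coef1 e w := by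
  induction w with
  | zero => rw [smul_zero, map_zero, map_zero]
  | add x y hx hy => rw [smul_add, map_add, map_add, hx, hy]
  | tmul p z =>
      have h1 : (X (0 : Fin 1) : MvPolynomial (Fin 1) R) • (p ⊗ₜ[R] z)
          = ((X 0 * p : MvPolynomial (Fin 1) R) ⊗ₜ[R] z) := by
        rw [TensorProduct.smul_tmul', smul_eq_mul]
      rw [h1, coef1, coefT_tmul, MvPolynomial.coeff_X_mul', coef1, coefT_tmul]
      have hmem : (0 : Fin 1) ∈ (Finsupp.single (0 : Fin 1) (e + 1)).support := by
        simp
      rw [if_pos hmem]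
      congr 2
      apply Finsupp.ext
      intro a
      have ha : a = 0 := Subsingleton.elim a 0
      subst ha
      rw [Finsupp.tsub_apply]
      simp

lemma coef1_Xpow_smul (q : ℕ) : ∀ (e : ℕ) (w : MvPolynomial (Fin 1) R ⊗[R] M),
    coef1 e (((X (0 : Fin 1) : MvPolynomial (Fin 1) R) ^ q) • w)
      = if q ≤ e then coef1 (e - q) w else 0 := by
  induction q with
  | zero => intro e w; simp
  | succ q IH =>
      intro e w
      rw [pow_succ, mul_smul, IH]
      by_cases h1 : q ≤ e
      · rw [if_pos h1]
        by_cases h2 : q + 1 ≤ e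
        · rw [if_pos h2]
          have h3 : e - q = (e - (q + 1)) + 1 := by omega
          rw [h3, coef1_X_smul_succ]
        · rw [if_neg h2]
          have h3 : e - q = 0 := by omega
          rw [h3, coef1_X_smul_zero]
      · rw [if_neg h1, if_neg (by omega)]

lemma coef1_term_smul (s : R) (q e : ℕ) (w : MvPolynomial (Fin 1) R ⊗[R] M) :
    coef1 e ((MvPolynomial.C s * (X (0 : Fin 1)) ^ q) • w)
      = if q ≤ e then s • coef1 (e - q) w else 0 := by
  rw [mul_smul, C_smul, map_smul, coef1_Xpow_smul]
  by_cases h : q ≤ e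
  · rw [if_pos h, if_pos h]
  · rw [if_neg h, if_neg h, smul_zero]


lemma mccoy_aux (S : ℕ) (c : ℕ → R) :
    ∀ D : ℕ, ∀ w : MvPolynomial (Fin 1) R ⊗[R] M, deg1 w ≤ D → w ≠ 0 →
      ((∑ q ∈ Finset.range S,
        MvPolynomial.C (c q) * (X (0 : Fin 1) : MvPolynomial (Fin 1) R) ^ q) • w = 0) →
      ∃ z : M, z ≠ 0 ∧ ∀ q, q < S → c q • z = 0 := by
  intro D
  induction D using Nat.strong_induction_on with
  | _ D IHD =>
  intro w hdeg hw h0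
  classical
  have hconv : ∀ e : ℕ, (∑ q ∈ Finset.range S,
      if q ≤ e then c q • coef1 (e - q) w else (0 : M)) = 0 := by
    intro e
    have h1 := congrArg (coef1 (M := M) e) h0
    rw [map_zero, Finset.sum_smul, map_sum] at h1
    exact (Finset.sum_congr rfl fun q _ => (coef1_term_smul (c q) q e w).symm).trans h1
  by_cases hann : ∀ q, q < S → ∀ e, c q • coef1 e w = 0
  · exact ⟨coef1 (deg1 w) w, coef1_deg1_ne_zero w hw, fun q hq => hann q hq _⟩
  · push_neg at hann
    set Q := (Finset.range S).filter (fun q => ∃ e, c q • coef1 e w ≠ 0) with hQ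
    have hQne : Q.Nonempty := by
      obtain ⟨q, hq, e, he⟩ := hann
      exact ⟨q, Finset.mem_filter.mpr ⟨Finset.mem_range.mpr hq, ⟨e, he⟩⟩⟩
    set q₀ := Q.max' hQne with hq₀
    have hq₀Q : q₀ ∈ Q := Q.max'_mem hQne
    have hq₀S : q₀ < S := Finset.mem_range.mp (Finset.mem_filter.mp hq₀Q).1
    obtain ⟨e₀, he₀⟩ : ∃ e, c q₀ • coef1 e w ≠ 0 := (Finset.mem_filter.mp hq₀Q).2
    have hmax : ∀ q, q < S → q₀ < q → ∀ e, c q • coef1 e w = 0 := by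
      intro q hq hgt e
      by_contra hne
      have hqQ : q ∈ Q := Finset.mem_filter.mpr ⟨Finset.mem_range.mpr hq, ⟨e, hne⟩⟩
      have := Q.le_max' q hqQ
      omega
    have htop : c q₀ • coef1 (deg1 w) w = 0 := by
      have hc := hconv (deg1 w + q₀)
      rw [Finset.sum_eq_single q₀] at hc
      · rwa [if_pos (by omega), Nat.add_sub_cancel] at hc
      · intro q hqmem hqne
        rcases lt_or_gt_of_ne hqne with hlt | hgt
        · rw [if_pos (by omega), coef1_eq_zero_of_deg1_lt w _ (by omega), smul_zero]
        · have hz := hmax q (Finset.mem_range.mp hqmem) hgt (deg1 w + q₀ - q)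
          by_cases hle : q ≤ deg1 w + q₀
          · rw [if_pos hle, hz]
          · rw [if_neg hle]
      · intro habs
        exact absurd (Finset.mem_range.mpr hq₀S) habs
    set w' := c q₀ • w with hw'def
    have hcoefw' : ∀ e, coef1 (M := M) e w' = c q₀ • coef1 e w := fun e => map_smul _ _ _
    have hw'ne : w' ≠ 0 := by
      intro h
      apply he₀
      rw [← hcoefw' e₀, h, map_zero]
    have hTsup : ∀ d ∈ (MvPolynomial.scalarRTensor (R := R) (σ := Fin 1) (N := M) w').support,
        d 0 < deg1 w := by
      intro d hd
      have hne : coef1 (d 0) w' ≠ 0 := by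
        rw [coef1, coefT_apply, ← fin1_eq_single d]
        exact Finsupp.mem_support_iff.mp hd
      have hle : d 0 ≤ deg1 w := by
        by_contra hlt
        exact hne (by rw [hcoefw', coef1_eq_zero_of_deg1_lt w _ (by omega), smul_zero])
      have hnetop : d 0 ≠ deg1 w := by
        intro h
        rw [hcoefw', h, htop] at hne
        exact hne rfl
      omega
    have hdeg'lt : deg1 w' < deg1 w := by
      have hpos : 0 < deg1 w := by
        have hT : MvPolynomial.scalarRTensor (R := R) (σ := Fin 1) (N := M) w' ≠ 0 := by
          intro h
          apply hw'ne
          have := congrArg (MvPolynomial.scalarRTensor (R := R) (σ := Fin 1) (N := M)).symm h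
          simpa using this
        obtain ⟨d, hd⟩ := Finsupp.support_nonempty_iff.mpr hT
        exact lt_of_le_of_lt (Nat.zero_le _) (hTsup d hd)
      exact (Finset.sup_lt_iff hpos).mpr hTsup
    have ha' : (∑ q ∈ Finset.range S,
        MvPolynomial.C (c q) * (X (0 : Fin 1) : MvPolynomial (Fin 1) R) ^ q) • w' = 0 := by
      rw [hw'def, smul_comm_poly, h0, smul_zero]
    exact IHD (deg1 w') (by omega) w' le_rfl hw'ne ha'

lemma mccoy (S : ℕ) (c : ℕ → R) (w : MvPolynomial (Fin 1) R ⊗[R] M) (hw : w ≠ 0)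
    (h0 : (∑ q ∈ Finset.range S,
      MvPolynomial.C (c q) * (X (0 : Fin 1) : MvPolynomial (Fin 1) R) ^ q) • w = 0) :
    ∃ z : M, z ≠ 0 ∧ ∀ q, q < S → c q • z = 0 :=
  mccoy_aux S c (deg1 w) w le_rfl hw h0



/-- Section 5: RHS implies the annihilator condition. -/
lemma rhs_to_ann {n m : ℕ} (φ : Matrix (Fin n) (Fin m) R)
    (h : ∃ (k : ℕ) (a : MvPolynomial (Fin k) R),
      a ∈ Ideal.map (MvPolynomial.C (σ := Fin k) (R := R)) (minorsIdeal φ m) ∧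
      IsSMulRegular (TensorProduct R (MvPolynomial (Fin k) R) M) a) :
    ∀ z : M, (∀ (ri : Fin m → Fin n) (ci : Fin m → Fin m),
      Function.Injective ri → Function.Injective ci →
      (φ.submatrix ri ci).det • z = 0) → z = 0 := by
  obtain ⟨k, a, ha, hreg⟩ := h
  intro z hz
  have hIz : ∀ s ∈ minorsIdeal φ m, s • z = 0 := by
    intro s hs
    refine Submodule.span_induction (p := fun x _ => x • z = 0) ?_ ?_ ?_ ?_ hs
    · rintro x ⟨ri, ci, h1, h2, rfl⟩
      exact hz ri ci h1 h2
    · exact zero_smul R z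
    · intro x y _ _ hx hy
      rw [add_smul, hx, hy, add_zero]
    · intro r x _ hx
      rw [smul_eq_mul, mul_smul, hx, smul_zero]
  have hA : a • ((1 : MvPolynomial (Fin k) R) ⊗ₜ[R] z) = 0 := by
    have ha' : a ∈ Ideal.span ((MvPolynomial.C (σ := Fin k) (R := R)) ''
        (minorsIdeal φ m : Set R)) := ha
    refine Submodule.span_induction
      (p := fun x _ => x • ((1 : MvPolynomial (Fin k) R) ⊗ₜ[R] z) = 0) ?_ ?_ ?_ ?_ ha'
    · rintro x ⟨s, hsI, rfl⟩
      rw [TensorProduct.smul_tmul', smul_eq_mul, mul_one]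
      have hCs : (MvPolynomial.C s : MvPolynomial (Fin k) R)
          = s • (1 : MvPolynomial (Fin k) R) := by
        rw [← MvPolynomial.algebraMap_eq, Algebra.algebraMap_eq_smul_one]
      rw [hCs, TensorProduct.smul_tmul, hIz s hsI, TensorProduct.tmul_zero]
    · exact zero_smul _ _
    · intro x y _ _ hx hy
      rw [add_smul, hx, hy, add_zero]
    · intro r x _ hx
      rw [smul_eq_mul, mul_smul, hx, smul_zero]
  have hz0 : (1 : MvPolynomial (Fin k) R) ⊗ₜ[R] z
      = (0 : TensorProduct R (MvPolynomial (Fin k) R) M) :=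
    hreg (show a • ((1 : MvPolynomial (Fin k) R) ⊗ₜ[R] z) = a • 0 by rw [hA, smul_zero])
  have := congrArg (fun w => TensorProduct.lid R M
    (LinearMap.rTensor M (MvPolynomial.lcoeff R (0 : Fin k →₀ ℕ)) w)) hz0
  simpa [MvPolynomial.lcoeff_apply, MvPolynomial.coeff_zero_one] using this



open MvPolynomial in
/-- Section 4: the annihilator condition implies the RHS. -/
lemma ann_to_rhs {n m : ℕ} (φ : Matrix (Fin n) (Fin m) R)
    (hann : ∀ z : M, (∀ (ri : Fin m → Fin n) (ci : Fin m → Fin m),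
      Function.Injective ri → Function.Injective ci →
      (φ.submatrix ri ci).det • z = 0) → z = 0) :
    ∃ (k : ℕ) (a : MvPolynomial (Fin k) R),
      a ∈ Ideal.map (MvPolynomial.C (σ := Fin k) (R := R)) (minorsIdeal φ m) ∧
      IsSMulRegular (TensorProduct R (MvPolynomial (Fin k) R) M) a := by
  classical
  set ι := ((Fin m → Fin n) × (Fin m → Fin m)) with hι
  set S := Fintype.card ι with hS
  set eqv : ι ≃ Fin S := Fintype.equivFin ι with heqv
  set c : ℕ → R := fun q =>
    if h : q < S then (φ.submatrix (eqv.symm ⟨q, h⟩).1 (eqv.symm ⟨q, h⟩).2).det else 0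
    with hc
  refine ⟨1, ∑ q ∈ Finset.range S,
    MvPolynomial.C (c q) * (X (0 : Fin 1) : MvPolynomial (Fin 1) R) ^ q, ?_, ?_⟩
  · refine Ideal.sum_mem _ fun q hq => ?_
    have hqS : q < S := Finset.mem_range.mp hq
    set p := eqv.symm ⟨q, hqS⟩ with hp
    have hcq : c q = (φ.submatrix p.1 p.2).det := by rw [hc]; exact dif_pos hqS
    by_cases h1 : Function.Injective p.1
    · by_cases h2 : Function.Injective p.2
      · have hmem : c q ∈ minorsIdeal φ m :=
          Ideal.subset_span ⟨p.1, p.2, h1, h2, hcq⟩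
        exact Ideal.mul_mem_right _ _ (Ideal.mem_map_of_mem _ hmem)
      · obtain ⟨x, y, hxy, hne⟩ := Function.not_injective_iff.mp h2
        have hdet : (φ.submatrix p.1 p.2).det = 0 :=
          Matrix.det_zero_of_column_eq hne (fun s => by
            simp only [Matrix.submatrix_apply, hxy])
        rw [hcq, hdet, map_zero, zero_mul]
        exact Ideal.zero_mem _
    · obtain ⟨x, y, hxy, hne⟩ := Function.not_injective_iff.mp h1
      have hdet : (φ.submatrix p.1 p.2).det = 0 :=
        Matrix.det_zero_of_row_eq hne (funext fun s => by
          simp only [Matrix.submatrix_apply, hxy])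
      rw [hcq, hdet, map_zero, zero_mul]
      exact Ideal.zero_mem _
  · intro w1 w2 heq
    simp only at heq
    have hsub : (∑ q ∈ Finset.range S,
        MvPolynomial.C (c q) * (X (0 : Fin 1) : MvPolynomial (Fin 1) R) ^ q) • (w1 - w2)
        = 0 := by
      rw [smul_sub, heq, sub_self]
    rw [← sub_eq_zero]
    by_contra h0
    obtain ⟨z, hzne, hz⟩ := mccoy S c (w1 - w2) h0 hsub
    apply hzne
    apply hann
    intro ri ci hri hci
    have hqS : ((eqv ⟨ri, ci⟩ : Fin S) : ℕ) < S := (eqv ⟨ri, ci⟩).isLt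
    have hcq : c ((eqv ⟨ri, ci⟩ : Fin S) : ℕ) = (φ.submatrix ri ci).det := by
      simp only [hc]
      rw [dif_pos hqS]
      congr 1 <;> rw [Fin.eta, Equiv.symm_apply_apply]
    rw [← hcq]
    exact hz _ hqS


end NorthcottAux

theorem injective_tensor_iff_trueGrade_ge_one
    {R : Type*} [CommRing R] (M : Type*) [AddCommGroup M] [Module R M]
    (m n : ℕ) (hmn : m ≤ n) (φ : Matrix (Fin n) (Fin m) R) :
    Function.Injective (LinearMap.rTensor M (Matrix.mulVecLin φ)) ↔
      ∃ (k : ℕ) (a : MvPolynomial (Fin k) R),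
        a ∈ Ideal.map (MvPolynomial.C (σ := Fin k) (R := R)) (minorsIdeal φ m) ∧
        IsSMulRegular (TensorProduct R (MvPolynomial (Fin k) R) M) a := by
  rw [NorthcottAux.inj_rTensor_iff_mvec (M := M) φ]
  constructor
  · intro hinj
    apply NorthcottAux.ann_to_rhs (M := M) φ
    intro z hz
    by_contra h0
    obtain ⟨u, hu, hmu⟩ := NorthcottAux.ann_to_ker (M := M) φ m le_rfl z h0 hz
    apply hu
    exact hinj (by rw [hmu, map_zero])
  · intro h
    have hann := NorthcottAux.rhs_to_ann (M := M) φ h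
    rw [injective_iff_map_eq_zero]
    intro u hu
    by_contra h0
    obtain ⟨z, hz, hza⟩ := NorthcottAux.ker_to_ann (M := M) φ u h0 hu
    exact hz (hann z hza)
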